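/- Let k ≥ 3 be an integer. Let G be an edge-colored graph containing no rainbow matching of size k, and let H be a rainbow representative subgraph of G. Suppose W ⊆ V(G) with |W| = 2k−1 is such that every edge of H has both endpoints in W, and suppose there exist vertices w ∈ W and u ∈ V(G) ∖ W with uw ∈ E(G). Then some vertex of W has degree at most k−1 in H. -/

import Mathlib

open Finset

/-- Pairwise vertex-disjointness of a finset of edges. -/
def EdgeDisj {V : Type*} (M : Finset (Sym2 V)) : Prop :=
  ∀ e ∈ M, ∀ f ∈ M, e ≠ f → ∀ v : V, v ∈ e → v ∉ f

lemma sym2_eq_of_mem {V : Type*} {e : Sym2 V} {a b : V}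
    (ha : a ∈ e) (hb : b ∈ e) (hab : a ≠ b) : e = s(a, b) := by
  induction e using Sym2.ind with
  | _ x y =>
    rw [Sym2.mem_iff] at ha hb
    rcases ha with rfl | rfl <;> rcases hb with rfl | rfl
    · exact absurd rfl hab
    · rfl
    · exact Sym2.eq_swap
    · exact absurd rfl hab

lemma insert_edge {V : Type*} {K : SimpleGraph V} {M : Finset (Sym2 V)}
    (hM1 : ↑M ⊆ K.edgeSet) (hM2 : EdgeDisj M)
    (hmax : ∀ M' : Finset (Sym2 V), ↑M' ⊆ K.edgeSet → EdgeDisj M' → M'.card ≤ M.card)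
    {p a : V} (hpa : K.Adj p a)
    (hp : ∀ e ∈ M, p ∉ e) (ha : ∀ e ∈ M, a ∉ e) : False := by
  classical
  have hnm : s(p, a) ∉ M := fun h => hp _ h (Sym2.mem_mk_left p a)
  have h1 : ↑(insert s(p, a) M) ⊆ K.edgeSet := by
    rw [Finset.coe_insert, Set.insert_subset_iff]
    exact ⟨K.mem_edgeSet.2 hpa, hM1⟩
  have h2 : EdgeDisj (insert s(p, a) M) := by
    intro e he e' he' hne v hv
    rcases Finset.mem_insert.1 he with rfl | heM
    · rcases Finset.mem_insert.1 he' with rfl | heM'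
      · exact absurd rfl hne
      · rcases Sym2.mem_iff.1 hv with rfl | rfl
        · exact hp _ heM'
        · exact ha _ heM'
    · rcases Finset.mem_insert.1 he' with rfl | heM'
      · intro hv'
        rcases Sym2.mem_iff.1 hv' with rfl | rfl
        · exact hp _ heM hv
        · exact ha _ heM hv
      · exact hM2 _ heM _ heM' hne v hv
  have := hmax _ h1 h2
  rw [Finset.card_insert_of_notMem hnm] at this
  omega

lemma sym2_not_mem {α : Type*} {a c d : α} (h1 : a ≠ c) (h2 : a ≠ d) : a ∉ s(c, d) := by
  rw [Sym2.mem_iff]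
  rintro (rfl | rfl)
  exacts [h1 rfl, h2 rfl]

lemma count_lemma {V : Type*} [Fintype V] [DecidableEq V] {K : SimpleGraph V}
    [DecidableRel K.Adj] {M : Finset (Sym2 V)}
    (hM1 : ↑M ⊆ K.edgeSet) (hM2 : EdgeDisj M)
    (hmax : ∀ M' : Finset (Sym2 V), ↑M' ⊆ K.edgeSet → EdgeDisj M' → M'.card ≤ M.card)
    {x y : V} (hxy : x ≠ y)
    (hx : ∀ e ∈ M, x ∉ e) (hy : ∀ e ∈ M, y ∉ e) :
    K.degree x + K.degree y ≤ 2 * M.card := by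
  classical
  have aux2 : ∀ a b : V, K.Adj x a → K.Adj y b → s(a, b) ∈ M → False := by
    intro a b hxa hyb habM
    have hKab : K.Adj a b := K.mem_edgeSet.1 (hM1 habM)
    have hab : a ≠ b := hKab.ne
    have hxb : x ≠ b := fun h => hx _ habM (h ▸ Sym2.mem_mk_right a b)
    have hya : y ≠ a := fun h => hy _ habM (h ▸ Sym2.mem_mk_left a b)
    have haE : ∀ e ∈ M.erase s(a, b), a ∉ e := fun e heE =>
      hM2 _ habM _ (Finset.mem_of_mem_erase heE)
        (Ne.symm (Finset.ne_of_mem_erase heE)) a (Sym2.mem_mk_left a b)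
    have hbE : ∀ e ∈ M.erase s(a, b), b ∉ e := fun e heE =>
      hM2 _ habM _ (Finset.mem_of_mem_erase heE)
        (Ne.symm (Finset.ne_of_mem_erase heE)) b (Sym2.mem_mk_right a b)
    have hxE : ∀ e ∈ M.erase s(a, b), x ∉ e := fun e heE => hx _ (Finset.mem_of_mem_erase heE)
    have hyE : ∀ e ∈ M.erase s(a, b), y ∉ e := fun e heE => hy _ (Finset.mem_of_mem_erase heE)
    have hsub : ↑(insert s(x, a) (insert s(y, b) (M.erase s(a, b)))) ⊆ K.edgeSet := by
      rw [Finset.coe_insert, Set.insert_subset_iff, Finset.coe_insert, Set.insert_subset_iff]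
      exact ⟨K.mem_edgeSet.2 hxa, K.mem_edgeSet.2 hyb,
        Set.Subset.trans (Finset.coe_subset.2 (Finset.erase_subset _ _)) hM1⟩
    have hd : EdgeDisj (insert s(x, a) (insert s(y, b) (M.erase s(a, b)))) := by
      intro e he e' he' hne v hv
      simp only [Finset.mem_insert] at he he'
      rcases he with rfl | rfl | heE
      · rcases Sym2.mem_iff.1 hv with rfl | rfl
        · rcases he' with rfl | rfl | heE'
          · exact absurd rfl hne
          · exact sym2_not_mem hxy hxb
          · exact hxE _ heE'
        · rcases he' with rfl | rfl | heE'
          · exact absurd rfl hne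
          · exact sym2_not_mem (Ne.symm hya) hab
          · exact haE _ heE'
      · rcases Sym2.mem_iff.1 hv with rfl | rfl
        · rcases he' with rfl | rfl | heE'
          · exact sym2_not_mem (Ne.symm hxy) hya
          · exact absurd rfl hne
          · exact hyE _ heE'
        · rcases he' with rfl | rfl | heE'
          · exact sym2_not_mem (Ne.symm hxb) (Ne.symm hab)
          · exact absurd rfl hne
          · exact hbE _ heE'
      · rcases he' with rfl | rfl | heE'
        · intro hv'
          rcases Sym2.mem_iff.1 hv' with rfl | rfl
          · exact hxE _ heE hv
          · exact haE _ heE hv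
        · intro hv'
          rcases Sym2.mem_iff.1 hv' with rfl | rfl
          · exact hyE _ heE hv
          · exact hbE _ heE hv
        · exact hM2 _ (Finset.mem_of_mem_erase heE) _ (Finset.mem_of_mem_erase heE') hne v hv
    have hynot : s(y, b) ∉ M.erase s(a, b) := fun h =>
      hy _ (Finset.mem_of_mem_erase h) (Sym2.mem_mk_left y b)
    have hxnot : s(x, a) ∉ insert s(y, b) (M.erase s(a, b)) := by
      intro h
      rcases Finset.mem_insert.1 h with h' | h'
      · exact sym2_not_mem hxy hxb (h' ▸ Sym2.mem_mk_left x a)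
      · exact hx _ (Finset.mem_of_mem_erase h') (Sym2.mem_mk_left x a)
    have hle := hmax _ hsub hd
    rw [Finset.card_insert_of_notMem hxnot, Finset.card_insert_of_notMem hynot,
      Finset.card_erase_of_mem habM] at hle
    have hpos : 1 ≤ M.card := Finset.card_pos.2 ⟨_, habM⟩
    omega
  have cov : ∀ v : V, K.Adj x v ∨ K.Adj y v → ∃ e ∈ M, v ∈ e := by
    intro v hv
    by_contra hnc
    push_neg at hnc
    rcases hv with h | h
    · exact insert_edge hM1 hM2 hmax h hx hnc
    · exact insert_edge hM1 hM2 hmax h hy hnc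
  set g : V → Sym2 V := fun v => if h : ∃ e ∈ M, v ∈ e then h.choose else s(x, x) with hg
  have gspec : ∀ v : V, (∃ e ∈ M, v ∈ e) → g v ∈ M ∧ v ∈ g v := by
    intro v h
    rw [hg]
    simp only [dif_pos h]
    exact h.choose_spec
  set T : Finset (V × Bool) :=
    ((K.neighborFinset x).image fun v => (v, false)) ∪
      ((K.neighborFinset y).image fun v => (v, true)) with hT
  have memT : ∀ v : V, ∀ i : Bool, (v, i) ∈ T →
      (K.Adj x v ∧ i = false) ∨ (K.Adj y v ∧ i = true) := by
    intro v i hvi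
    rw [hT, Finset.mem_union] at hvi
    rcases hvi with h | h
    · obtain ⟨u', hu', h2⟩ := Finset.mem_image.1 h
      obtain ⟨rfl, rfl⟩ := Prod.mk.injEq _ _ _ _ ▸ h2
      exact Or.inl ⟨(SimpleGraph.mem_neighborFinset _ _ _).1 hu', rfl⟩
    · obtain ⟨u', hu', h2⟩ := Finset.mem_image.1 h
      obtain ⟨rfl, rfl⟩ := Prod.mk.injEq _ _ _ _ ▸ h2
      exact Or.inr ⟨(SimpleGraph.mem_neighborFinset _ _ _).1 hu', rfl⟩
  have cardT : T.card = K.degree x + K.degree y := by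
    rw [hT, Finset.card_union_of_disjoint, Finset.card_image_of_injective,
      Finset.card_image_of_injective]
    · rfl
    · intro a b h; simpa using h
    · intro a b h; simpa using h
    · rw [Finset.disjoint_left]
      rintro ⟨v, i⟩ h1 h2
      obtain ⟨u1, _, hu1⟩ := Finset.mem_image.1 h1
      obtain ⟨u2, _, hu2⟩ := Finset.mem_image.1 h2
      rw [← hu2] at hu1
      simpa using congrArg Prod.snd hu1
  have himg : ∀ t ∈ T, g t.1 ∈ M := by
    rintro ⟨v, i⟩ ht
    rcases memT v i ht with ⟨h, _⟩ | ⟨h, _⟩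
    · exact (gspec v (cov v (Or.inl h))).1
    · exact (gspec v (cov v (Or.inr h))).1
  have fib : ∀ e ∈ M, (T.filter fun t => g t.1 = e).card ≤ 2 := by
    intro e heM
    induction e using Sym2.ind with
    | _ a b =>
      have hKab : K.Adj a b := K.mem_edgeSet.1 (hM1 heM)
      have hab : a ≠ b := hKab.ne
      have hcard : (T.filter fun t => g t.1 = s(a, b)).card ≤ (Finset.univ : Finset Bool).card := by
        apply Finset.card_le_card_of_injOn (fun t => ((t.1 = a : Bool) != t.2))
          (fun _ _ => Finset.mem_univ _)
        rintro ⟨v, i⟩ h1 ⟨v', i'⟩ h2 heq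
        rw [Finset.mem_coe, Finset.mem_filter] at h1 h2
        obtain ⟨hT1, hg1⟩ := h1
        obtain ⟨hT2, hg2⟩ := h2
        have hm1 := memT v i hT1
        have hm2 := memT v' i' hT2
        have hv1 : v ∈ s(a, b) := by
          rw [← hg1]
          rcases hm1 with ⟨h, _⟩ | ⟨h, _⟩
          · exact (gspec v (cov v (Or.inl h))).2
          · exact (gspec v (cov v (Or.inr h))).2
        have hv2 : v' ∈ s(a, b) := by
          rw [← hg2]
          rcases hm2 with ⟨h, _⟩ | ⟨h, _⟩
          · exact (gspec v' (cov v' (Or.inl h))).2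
          · exact (gspec v' (cov v' (Or.inr h))).2
        rw [Sym2.mem_iff] at hv1 hv2
        simp only at heq
        have heMswap : s(b, a) ∈ M := by rwa [Sym2.eq_swap]
        rcases hm1 with ⟨hA1, rfl⟩ | ⟨hA1, rfl⟩ <;> rcases hm2 with ⟨hA2, rfl⟩ | ⟨hA2, rfl⟩ <;>
          rcases hv1 with h1e | h1e <;> rcases hv2 with h2e | h2e
        · rw [h1e, h2e]
        · simp [h1e, h2e, hab, Ne.symm hab] at heq
        · simp [h1e, h2e, hab, Ne.symm hab] at heq
        · rw [h1e, h2e]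
        · simp [h1e, h2e, hab, Ne.symm hab] at heq
        · exact (aux2 a b (h1e ▸ hA1) (h2e ▸ hA2) heM).elim
        · exact (aux2 b a (h1e ▸ hA1) (h2e ▸ hA2) heMswap).elim
        · simp [h1e, h2e, hab, Ne.symm hab] at heq
        · simp [h1e, h2e, hab, Ne.symm hab] at heq
        · exact (aux2 b a (h2e ▸ hA2) (h1e ▸ hA1) heMswap).elim
        · exact (aux2 a b (h2e ▸ hA2) (h1e ▸ hA1) heM).elim
        · simp [h1e, h2e, hab, Ne.symm hab] at heq
        · rw [h1e, h2e]
        · simp [h1e, h2e, hab, Ne.symm hab] at heq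
        · simp [h1e, h2e, hab, Ne.symm hab] at heq
        · rw [h1e, h2e]
      simpa using hcard
  have key : T.card ≤ 2 * M.card :=
    Finset.card_le_mul_card_image_of_maps_to himg 2 fib
  omega

lemma covered_card_le {V : Type*} [DecidableEq V]
    (M : Finset (Sym2 V)) (C : Finset V) (hC : ∀ v ∈ C, ∃ e ∈ M, v ∈ e) :
    C.card ≤ 2 * M.card := by
  classical
  rcases C.eq_empty_or_nonempty with rfl | ⟨v0, hv0⟩
  · simp
  obtain ⟨e0, _, _⟩ := hC v0 hv0
  set g : V → Sym2 V := fun v => if h : ∃ e ∈ M, v ∈ e then h.choose else e0 with hg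
  have gspec : ∀ v : V, (∃ e ∈ M, v ∈ e) → g v ∈ M ∧ v ∈ g v := by
    intro v h
    rw [hg]
    simp only [dif_pos h]
    exact h.choose_spec
  apply Finset.card_le_mul_card_image_of_maps_to (f := g) (fun v hv => (gspec v (hC v hv)).1)
  intro e heM
  induction e using Sym2.ind with
  | _ a b =>
    have hsub : (C.filter fun v => g v = s(a, b)) ⊆ {a, b} := by
      intro v hv
      obtain ⟨hvC, hve⟩ := Finset.mem_filter.1 hv
      have : v ∈ s(a, b) := hve ▸ (gspec v (hC v hvC)).2
      rw [Sym2.mem_iff] at this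
      simpa using this
    refine le_trans (Finset.card_le_card hsub) ?_
    exact le_trans (Finset.card_insert_le _ _) (by simp)

lemma matching_of_min_degree {V : Type*} [Fintype V] [DecidableEq V]
    (K : SimpleGraph V) [DecidableRel K.Adj] (m : ℕ) (hm : 2 ≤ m)
    (S : Finset V) (hS : S.card = 2 * m)
    (hKS : ∀ e ∈ K.edgeSet, ∀ v ∈ e, v ∈ S)
    (f : Sym2 V)
    (hdeg1 : ∀ v ∈ S, m - 1 ≤ K.degree v)
    (hdeg2 : ∀ v ∈ S, v ∉ f → m ≤ K.degree v) :
    ∃ M : Finset (Sym2 V), M.card = m ∧ ↑M ⊆ K.edgeSet ∧ EdgeDisj M := by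
  classical
  obtain ⟨M, hMmem, hMmax⟩ := Finset.exists_max_image
    ((Finset.univ : Finset (Finset (Sym2 V))).filter fun N => ↑N ⊆ K.edgeSet ∧ EdgeDisj N)
    Finset.card ⟨∅, Finset.mem_filter.2 ⟨Finset.mem_univ _, by simp, by simp [EdgeDisj]⟩⟩
  obtain ⟨-, hM1, hM2⟩ := Finset.mem_filter.1 hMmem
  have hmax : ∀ M' : Finset (Sym2 V), ↑M' ⊆ K.edgeSet → EdgeDisj M' → M'.card ≤ M.card :=
    fun M' h1 h2 => hMmax M' (Finset.mem_filter.2 ⟨Finset.mem_univ _, h1, h2⟩)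
  by_cases hbig : m ≤ M.card
  · obtain ⟨N, hNsub, hNcard⟩ := Finset.exists_subset_card_eq hbig
    exact ⟨N, hNcard, Set.Subset.trans (Finset.coe_subset.2 hNsub) hM1,
      fun e he e' he' hne v hv => hM2 e (hNsub he) e' (hNsub he') hne v hv⟩
  exfalso
  push_neg at hbig
  -- covered and uncovered vertices
  set C : Finset V := S.filter (fun v => ∃ e ∈ M, v ∈ e) with hCdef
  have hCcard : C.card ≤ 2 * M.card :=
    covered_card_le M C fun v hv => (Finset.mem_filter.1 hv).2
  set U : Finset V := S \ C with hUdef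
  have hCS : C ⊆ S := Finset.filter_subset _ _
  have hUcard : 2 ≤ U.card := by
    rw [hUdef, Finset.card_sdiff_of_subset hCS, hS]
    omega
  have hUuncov : ∀ v ∈ U, ∀ e ∈ M, v ∉ e := by
    intro v hv e he hve
    obtain ⟨hvS, hvC⟩ := Finset.mem_sdiff.1 hv
    exact hvC (Finset.mem_filter.2 ⟨hvS, e, he, hve⟩)
  have hUS : ∀ v ∈ U, v ∈ S := fun v hv => (Finset.mem_sdiff.1 hv).1
  by_cases hcase : ∃ v ∈ U, v ∉ f
  · obtain ⟨v, hvU, hvf⟩ := hcase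
    obtain ⟨y, hyU, hyv⟩ := Finset.exists_mem_ne (s := U) (by omega) v
    have hcnt := count_lemma hM1 hM2 hmax (Ne.symm hyv)
      (hUuncov v hvU) (hUuncov y hyU)
    have d1 : m ≤ K.degree v := hdeg2 v (hUS v hvU) hvf
    have d2 : m - 1 ≤ K.degree y := hdeg1 y (hUS y hyU)
    omega
  push_neg at hcase
  -- all uncovered vertices are in f
  obtain ⟨p, hpU⟩ := Finset.card_pos.1 (by omega : 0 < U.card)
  obtain ⟨q, hqU, hqp⟩ := Finset.exists_mem_ne (s := U) (by omega) p
  have hf : f = s(p, q) := sym2_eq_of_mem (hcase p hpU) (hcase q hqU) (Ne.symm hqp)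
  -- p has a neighbor a
  have hdp : 0 < K.degree p := by
    have := hdeg1 p (hUS p hpU)
    omega
  obtain ⟨a, hpa⟩ := K.degree_pos_iff_exists_adj p |>.1 hdp
  -- a is covered
  have hacov : ∃ e ∈ M, a ∈ e := by
    by_contra hnc
    push_neg at hnc
    exact insert_edge hM1 hM2 hmax hpa (hUuncov p hpU) hnc
  obtain ⟨e0, he0M, hae0⟩ := hacov
  set b := Sym2.Mem.other' hae0 with hbdef
  have hspec : s(a, b) = e0 := Sym2.other_spec' hae0
  have habE : s(a, b) ∈ K.edgeSet := by rw [hspec]; exact hM1 he0M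
  have hKab : K.Adj a b := K.mem_edgeSet.1 habE
  have hab : a ≠ b := hKab.ne
  have hbe0 : b ∈ e0 := by rw [← hspec]; exact Sym2.mem_mk_right a b
  have hap : a ≠ p := fun h => hUuncov p hpU e0 he0M (h ▸ hae0)
  have haq : a ≠ q := fun h => hUuncov q hqU e0 he0M (h ▸ hae0)
  have hbp : b ≠ p := fun h => hUuncov p hpU e0 he0M (h ▸ hbe0)
  have hbq : b ≠ q := fun h => hUuncov q hqU e0 he0M (h ▸ hbe0)
  -- the shifted matching M' = insert s(p,a) (M.erase e0)
  set M' : Finset (Sym2 V) := insert s(p, a) (M.erase e0) with hM'def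
  have hpnot : s(p, a) ∉ M.erase e0 := fun h =>
    hUuncov p hpU _ (Finset.mem_of_mem_erase h) (Sym2.mem_mk_left p a)
  have hM'card : M'.card = M.card := by
    rw [hM'def, Finset.card_insert_of_notMem hpnot, Finset.card_erase_of_mem he0M]
    have : 1 ≤ M.card := Finset.card_pos.2 ⟨_, he0M⟩
    omega
  have hM'1 : ↑M' ⊆ K.edgeSet := by
    rw [hM'def, Finset.coe_insert, Set.insert_subset_iff]
    exact ⟨K.mem_edgeSet.2 hpa,
      Set.Subset.trans (Finset.coe_subset.2 (Finset.erase_subset _ _)) hM1⟩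
  have haE : ∀ e ∈ M.erase e0, a ∉ e := fun e he =>
    hM2 e0 he0M e (Finset.mem_of_mem_erase he) (Ne.symm (Finset.ne_of_mem_erase he)) a hae0
  have hbE : ∀ e ∈ M.erase e0, b ∉ e := fun e he =>
    hM2 e0 he0M e (Finset.mem_of_mem_erase he) (Ne.symm (Finset.ne_of_mem_erase he)) b hbe0
  have hpE : ∀ e ∈ M.erase e0, p ∉ e := fun e he =>
    hUuncov p hpU e (Finset.mem_of_mem_erase he)
  have hqE : ∀ e ∈ M.erase e0, q ∉ e := fun e he =>
    hUuncov q hqU e (Finset.mem_of_mem_erase he)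
  have hM'2 : EdgeDisj M' := by
    intro e he e' he' hne v hv
    rcases Finset.mem_insert.1 he with rfl | heE
    · rcases Finset.mem_insert.1 he' with rfl | heE'
      · exact absurd rfl hne
      · rcases Sym2.mem_iff.1 hv with rfl | rfl
        · exact hpE _ heE'
        · exact haE _ heE'
    · rcases Finset.mem_insert.1 he' with rfl | heE'
      · intro hv'
        rcases Sym2.mem_iff.1 hv' with rfl | rfl
        · exact hpE _ heE hv
        · exact haE _ heE hv
      · exact hM2 _ (Finset.mem_of_mem_erase heE) _ (Finset.mem_of_mem_erase heE') hne v hv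
  have hmax' : ∀ N : Finset (Sym2 V), ↑N ⊆ K.edgeSet → EdgeDisj N → N.card ≤ M'.card := by
    intro N h1 h2
    rw [hM'card]
    exact hmax N h1 h2
  -- q and b are uncovered by M'
  have hqM' : ∀ e ∈ M', q ∉ e := by
    intro e he
    rcases Finset.mem_insert.1 he with rfl | heE
    · exact sym2_not_mem hqp (Ne.symm haq)
    · exact hqE _ heE
  have hbM' : ∀ e ∈ M', b ∉ e := by
    intro e he
    rcases Finset.mem_insert.1 he with rfl | heE
    · exact sym2_not_mem hbp (Ne.symm hab)
    · exact hbE _ heE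
  have hqb : q ≠ b := Ne.symm hbq
  have hcnt := count_lemma hM'1 hM'2 hmax' hqb hqM' hbM'
  have d1 : m - 1 ≤ K.degree q := hdeg1 q (hUS q hqU)
  have d2 : m ≤ K.degree b := by
    apply hdeg2 b (hKS _ habE b (Sym2.mem_mk_right a b))
    rw [hf]
    exact sym2_not_mem hbp hbq
  rw [hM'card] at hcnt
  omega


/-- `G` (with edge-coloring `c`) contains a rainbow matching of size `k`:
`k` pairwise vertex-disjoint edges of `G` with pairwise distinct colors. -/
def HasRainbowMatching {V α : Type*} (G : SimpleGraph V) (c : Sym2 V → α) (k : ℕ) : Prop :=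
  ∃ M : Finset (Sym2 V), M.card = k ∧ ↑M ⊆ G.edgeSet ∧
    (∀ e ∈ M, ∀ f ∈ M, e ≠ f → ∀ v : V, v ∈ e → v ∉ f) ∧
    Set.InjOn c ↑M

/-- `H` is a rainbow representative subgraph of the edge-colored graph `(G, c)`:
`H` is a (spanning) subgraph of `G`, its edges have pairwise distinct colors, and every
edge of `G` has the same color as some edge of `H` (one edge chosen per color class). -/
def IsRainbowRepresentative {V α : Type*} (G H : SimpleGraph V) (c : Sym2 V → α) : Prop :=
  H ≤ G ∧ Set.InjOn c H.edgeSet ∧ ∀ e ∈ G.edgeSet, ∃ f ∈ H.edgeSet, c e = c f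

/-- Claim 3.7: let `k ≥ 3`, let `G` be an edge-colored graph with no rainbow matching of
size `k`, and let `H` be a rainbow representative subgraph of `G`. Suppose `W` is a set of
`2k-1` vertices containing both endpoints of every edge of `H`, and suppose some `w ∈ W` is
joined in `G` to some `u ∉ W`. Then some vertex of `W` has degree at most `k-1` in `H`. -/
theorem claim_small_degree_vertex
    {V α : Type*} [Fintype V] (k : ℕ) (hk : 3 ≤ k)
    (G H : SimpleGraph V) (c : Sym2 V → α)
    (hno : ¬ HasRainbowMatching G c k)
    (hrep : IsRainbowRepresentative G H c)
    (W : Set V) (hW : W.ncard = 2 * k - 1)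
    (hHW : ∀ e ∈ H.edgeSet, ∀ v ∈ e, v ∈ W)
    (w : V) (hw : w ∈ W) (u : V) (hu : u ∉ W) (hadj : G.Adj u w) :
    ∃ x ∈ W, (H.neighborSet x).ncard ≤ k - 1 := by
  classical
  by_contra hcon
  push_neg at hcon
  obtain ⟨hHG, hinj, hcol⟩ := hrep
  have heuw : s(u, w) ∈ G.edgeSet := G.mem_edgeSet.2 hadj
  obtain ⟨f, hfH, hcuf⟩ := hcol _ heuw
  set K : SimpleGraph V :=
    { Adj := fun a b => H.Adj a b ∧ a ≠ w ∧ b ≠ w ∧ s(a, b) ≠ f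
      symm := by
        constructor
        rintro a b ⟨h1, h2, h3, h4⟩
        refine ⟨h1.symm, h3, h2, ?_⟩
        rwa [Sym2.eq_swap]
      loopless := ⟨fun a h => H.loopless.irrefl a h.1⟩ } with hKdef
  have hKAdj : ∀ a b : V, K.Adj a b ↔ (H.Adj a b ∧ a ≠ w ∧ b ≠ w ∧ s(a, b) ≠ f) :=
    fun a b => Iff.rfl
  set S : Finset V := (Set.toFinite W).toFinset.erase w with hSdef
  have hmemS : ∀ x : V, x ∈ S ↔ (x ≠ w ∧ x ∈ W) := by
    intro x
    rw [hSdef, Finset.mem_erase, Set.Finite.mem_toFinset]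
  have hwS0 : w ∈ (Set.toFinite W).toFinset := (Set.Finite.mem_toFinset _).2 hw
  have hScard : S.card = 2 * (k - 1) := by
    have h1 : (Set.toFinite W).toFinset.card = 2 * k - 1 := by
      rw [← Set.ncard_eq_toFinset_card]; exact hW
    rw [hSdef, Finset.card_erase_of_mem hwS0, h1]
    omega
  have hKS : ∀ e ∈ K.edgeSet, ∀ v ∈ e, v ∈ S := by
    intro e he
    induction e using Sym2.ind with
    | _ a b =>
      obtain ⟨h1, h2, h3, h4⟩ := (hKAdj a b).1 (K.mem_edgeSet.1 he)
      have heH : s(a, b) ∈ H.edgeSet := H.mem_edgeSet.2 h1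
      intro v hv
      rcases Sym2.mem_iff.1 hv with rfl | rfl
      · exact (hmemS v).2 ⟨h2, hHW _ heH _ hv⟩
      · exact (hmemS v).2 ⟨h3, hHW _ heH _ hv⟩
  have hdegH : ∀ x : V, (H.neighborSet x).ncard = H.degree x := by
    intro x
    simp [SimpleGraph.degree, SimpleGraph.neighborFinset_def, Set.ncard_eq_toFinset_card']
  have hdegHW : ∀ x ∈ W, k ≤ H.degree x := by
    intro x hx
    have h1 := hcon x hx
    rw [hdegH] at h1
    omega
  have hdegcore : ∀ v ∈ S, ∀ B : Finset V, w ∈ B →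
      (∀ b', H.Adj v b' → b' ∉ B → s(v, b') ≠ f) →
      H.degree v - B.card ≤ K.degree v := by
    intro v hvS B hwB hB
    obtain ⟨hvw, hvW⟩ := (hmemS v).1 hvS
    have hsub : H.neighborFinset v \ B ⊆ K.neighborFinset v := by
      intro b' hb'
      obtain ⟨hb'N, hb'B⟩ := Finset.mem_sdiff.1 hb'
      have hadj' : H.Adj v b' := (SimpleGraph.mem_neighborFinset _ _ _).1 hb'N
      have hb'w : b' ≠ w := fun h => hb'B (h ▸ hwB)
      exact (SimpleGraph.mem_neighborFinset _ _ _).2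
        ((hKAdj v b').2 ⟨hadj', hvw, hb'w, hB b' hadj' hb'B⟩)
    calc H.degree v - B.card ≤ (H.neighborFinset v \ B).card := Finset.le_card_sdiff B _
      _ ≤ K.degree v := Finset.card_le_card hsub
  have hdegK2 : ∀ v ∈ S, v ∉ f → k - 1 ≤ K.degree v := by
    intro v hvS hvf
    have h := hdegcore v hvS {w} (Finset.mem_singleton_self w) ?_
    · have hd : k ≤ H.degree v := hdegHW v ((hmemS v).1 hvS).2
      have hc : ({w} : Finset V).card = 1 := Finset.card_singleton w
      omega
    · intro b' _ _ heq
      exact hvf (heq ▸ Sym2.mem_mk_left v b')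
  have hdegK1 : ∀ v ∈ S, k - 2 ≤ K.degree v := by
    intro v hvS
    by_cases hvf : v ∈ f
    · have hosp : s(v, Sym2.Mem.other' hvf) = f := Sym2.other_spec' hvf
      have h := hdegcore v hvS {w, Sym2.Mem.other' hvf} (Finset.mem_insert_self _ _) ?_
      · have hd : k ≤ H.degree v := hdegHW v ((hmemS v).1 hvS).2
        have hc : ({w, Sym2.Mem.other' hvf} : Finset V).card ≤ 2 :=
          le_trans (Finset.card_insert_le _ _) (by simp)
        omega
      · intro b' _ hb'B heq
        apply hb'B
        have hb'o : b' = Sym2.Mem.other' hvf := Sym2.congr_right.1 (heq.trans hosp.symm)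
        rw [hb'o]
        exact Finset.mem_insert.2 (Or.inr (Finset.mem_singleton_self _))
    · have := hdegK2 v hvS hvf
      omega
  obtain ⟨M, hMcard, hM1, hM2⟩ := matching_of_min_degree K (k - 1) (by omega) S
    (by rw [hScard]) hKS f
    (fun v hv => by have := hdegK1 v hv; omega)
    (fun v hv hvf => by have := hdegK2 v hv hvf; omega)
  have hMedge : ∀ e ∈ M, e ∈ H.edgeSet ∧ (∀ v ∈ e, v ∈ W ∧ v ≠ w) ∧ e ≠ f := by
    intro e he
    have heK : e ∈ K.edgeSet := hM1 he
    induction e using Sym2.ind with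
    | _ a b =>
      obtain ⟨h1, h2, h3, h4⟩ := (hKAdj a b).1 (K.mem_edgeSet.1 heK)
      have heH : s(a, b) ∈ H.edgeSet := H.mem_edgeSet.2 h1
      refine ⟨heH, ?_, h4⟩
      intro v hv
      rcases Sym2.mem_iff.1 hv with rfl | rfl
      · exact ⟨hHW _ heH _ hv, h2⟩
      · exact ⟨hHW _ heH _ hv, h3⟩
  have huwM : s(u, w) ∉ M := fun h =>
    ((hMedge _ h).2.1 w (Sym2.mem_mk_right u w)).2 rfl
  apply hno
  refine ⟨insert s(u, w) M, ?_, ?_, ?_, ?_⟩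
  · rw [Finset.card_insert_of_notMem huwM, hMcard]
    omega
  · rw [Finset.coe_insert, Set.insert_subset_iff]
    exact ⟨heuw, fun e he => SimpleGraph.edgeSet_mono hHG ((hMedge _ (Finset.mem_coe.1 he)).1)⟩
  · intro e he e' he' hne v hv
    rcases Finset.mem_insert.1 he with rfl | heM
    · rcases Finset.mem_insert.1 he' with rfl | heM'
      · exact absurd rfl hne
      · rcases Sym2.mem_iff.1 hv with rfl | rfl
        · exact fun h => hu ((hMedge _ heM').2.1 v h).1
        · exact fun h => ((hMedge _ heM').2.1 v h).2 rfl
    · rcases Finset.mem_insert.1 he' with rfl | heM'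
      · intro hv'
        rcases Sym2.mem_iff.1 hv' with rfl | rfl
        · exact hu ((hMedge _ heM).2.1 v hv).1
        · exact ((hMedge _ heM).2.1 v hv).2 rfl
      · exact hM2 _ heM _ heM' hne v hv
  · intro e1 h1 e2 h2 hceq
    rw [Finset.coe_insert, Set.mem_insert_iff, Finset.mem_coe] at h1 h2
    rcases h1 with rfl | h1 <;> rcases h2 with rfl | h2
    · rfl
    · have hfe : f = e2 := hinj hfH (hMedge _ h2).1 (hcuf.symm.trans hceq)
      exact ((hMedge _ h2).2.2 hfe.symm).elim
    · have hfe : f = e1 := hinj hfH (hMedge _ h1).1 (hcuf.symm.trans hceq.symm)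
      exact ((hMedge _ h1).2.2 hfe.symm).elim
    · exact hinj (hMedge _ h1).1 (hMedge _ h2).1 hceq
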